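/- Let G be a graph and H a rooted graph with root r_H. Then b(G ∘ H) ≤ b(G) + ecc(r_H), where G ∘ H is the rooted product and ecc(r_H) is the eccentricity of r_H in H. -/

import Mathlib

noncomputable def burningNumber {V : Type*} (G : SimpleGraph V) : ℕ :=
  sInf {k | ∃ v : Fin k → V, ∀ u : V, ∃ i : Fin k, G.dist (v i) u ≤ k - 1 - i.val}

def rootedProduct {α β : Type*} (G : SimpleGraph α) (H : SimpleGraph β) (r : β) :
    SimpleGraph (α × β) :=
  SimpleGraph.fromRel (fun p q =>
    (p.1 = q.1 ∧ H.Adj p.2 q.2) ∨ (p.2 = r ∧ q.2 = r ∧ G.Adj p.1 q.1))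

noncomputable def eccentricity {β : Type*} [Fintype β] (H : SimpleGraph β) (v : β) : ℕ :=
  Finset.univ.sup (fun u => H.dist v u)

def homBase {α β : Type*} (G : SimpleGraph α) (H : SimpleGraph β) (r : β) :
    G →g rootedProduct G H r where
  toFun a := (a, r)
  map_rel' h := ⟨fun he => h.ne (congrArg Prod.fst he), Or.inl (Or.inr ⟨rfl, rfl, h⟩)⟩

def homFiber {α β : Type*} (G : SimpleGraph α) (H : SimpleGraph β) (r : β) (a : α) :
    H →g rootedProduct G H r where
  toFun b := (a, b)
  map_rel' h := ⟨fun he => h.ne (congrArg Prod.snd he), Or.inl (Or.inl ⟨rfl, h⟩)⟩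

lemma dist_rootedProduct_le {α β : Type*} (G : SimpleGraph α) (H : SimpleGraph β) (r : β)
    (hG : G.Connected) (hH : H.Connected) (c a : α) (b : β) :
    (rootedProduct G H r).dist (c, r) (a, b) ≤ G.dist c a + H.dist r b := by
  obtain ⟨p, hp⟩ := hG.exists_walk_length_eq_dist c a
  obtain ⟨q, hq⟩ := hH.exists_walk_length_eq_dist r b
  refine le_trans (SimpleGraph.dist_le
    ((p.map (homBase G H r)).append (q.map (homFiber G H r a)))) ?_
  refine (SimpleGraph.Walk.length_append _ _).trans_le ?_
  exact Nat.add_le_add ((SimpleGraph.Walk.length_map _ _).trans hp).le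
    ((SimpleGraph.Walk.length_map _ _).trans hq).le

theorem burning_rootedProduct_le {α β : Type*} [Fintype α] [Fintype β]
    (G : SimpleGraph α) (H : SimpleGraph β) (rH : β)
    (hG : G.Connected) (hH : H.Connected) :
    burningNumber (rootedProduct G H rH) ≤ burningNumber G + eccentricity H rH := by
  have hα : Nonempty α := hG.nonempty
  obtain ⟨a₀⟩ := hα
  -- the burning set for G is nonempty
  have hne : {k | ∃ v : Fin k → α, ∀ u : α, ∃ i : Fin k, G.dist (v i) u ≤ k - 1 - i.val}.Nonempty := by
    refine ⟨Finset.univ.sup (G.dist a₀) + 1, fun _ => a₀, fun u => ⟨⟨0, by omega⟩, ?_⟩⟩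
    have : G.dist a₀ u ≤ Finset.univ.sup (G.dist a₀) := Finset.le_sup (Finset.mem_univ u)
    simpa using this
  set k := burningNumber G with hk
  obtain ⟨w, hw⟩ : ∃ v : Fin k → α, ∀ u : α, ∃ i : Fin k, G.dist (v i) u ≤ k - 1 - i.val :=
    Nat.sInf_mem hne
  have hkpos : 0 < k := by
    rcases Nat.eq_zero_or_pos k with h0 | h
    · obtain ⟨i, -⟩ := hw a₀
      exact absurd i.isLt (by omega)
    · exact h
  set e := eccentricity H rH with he
  apply Nat.sInf_le
  refine ⟨fun j => if h : j.val < k then (w ⟨j.val, h⟩, rH) else (w ⟨0, hkpos⟩, rH), ?_⟩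
  rintro ⟨a, b⟩
  obtain ⟨i, hi⟩ := hw a
  have hik : i.val < k + e := by omega
  refine ⟨⟨i.val, hik⟩, ?_⟩
  simp only [i.isLt, dif_pos]
  have h1 : (rootedProduct G H rH).dist (w ⟨i.val, i.isLt⟩, rH) (a, b)
      ≤ G.dist (w ⟨i.val, i.isLt⟩) a + H.dist rH b :=
    dist_rootedProduct_le G H rH hG hH _ a b
  have h2 : H.dist rH b ≤ e := Finset.le_sup (Finset.mem_univ b)
  have h3 : G.dist (w ⟨i.val, i.isLt⟩) a ≤ k - 1 - i.val := by
    convert hi using 3 <;> simp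
  have hiv : i.val < k := i.isLt
  calc (rootedProduct G H rH).dist (w ⟨i.val, i.isLt⟩, rH) (a, b)
      ≤ (k - 1 - i.val) + e := le_trans h1 (Nat.add_le_add h3 h2)
    _ ≤ k + e - 1 - i.val := by omega
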